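/- Let L_0 be a densely defined symmetric minimal operator in a Hilbert space H (so M_0 = L_0 and L̂ = M̂ = L_0*), and let L_N be a self-adjoint correct extension of L_0. Let L be a boundary correct extension of L_0 with L^{-1} = L_N^{-1} + K, where K is a bounded operator on H with R(K) ⊆ Ker L̂ and R(L_0) ⊆ Ker K. Then L is self-adjoint if and only if K = K*. -/

import Mathlib

open scoped InnerProductSpace

/-- `Tinv` is a bounded, everywhere-defined inverse of the partially defined operator `T`. -/
def IsBoundedInverse {H : Type} [NormedAddCommGroup H] [InnerProductSpace ℂ H]
    (T : H →ₗ.[ℂ] H) (Tinv : H →L[ℂ] H) : Prop :=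
  (∀ f : H, ∃ hf : Tinv f ∈ T.domain, T ⟨Tinv f, hf⟩ = f) ∧
  ∀ u : T.domain, Tinv (T u) = (u : H)

/-- A minimal operator: closed, the closure of its range is not all of `H`,
and it has a bounded inverse on its range. -/
def IsMinimalOp {H : Type} [NormedAddCommGroup H] [InnerProductSpace ℂ H]
    (T : H →ₗ.[ℂ] H) : Prop :=
  T.IsClosed ∧ closure (Set.range fun u : T.domain => T u) ≠ Set.univ ∧
    ∃ C : ℝ, 0 < C ∧ ∀ u : T.domain, ‖(u : H)‖ ≤ C * ‖T u‖

/-- If a densely defined operator has an everywhere-defined bounded inverse whose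
quadratic form is symmetric, then the operator is self-adjoint. -/
theorem selfadjoint_of_inv_symm
    {H : Type} [NormedAddCommGroup H] [InnerProductSpace ℂ H] [CompleteSpace H]
    (L : H →ₗ.[ℂ] H) (hLdense : Dense (L.domain : Set H))
    (Linv : H →L[ℂ] H) (hLinv : IsBoundedInverse L Linv)
    (hsymm : ∀ f g : H, ⟪Linv f, g⟫_ℂ = ⟪f, Linv g⟫_ℂ) :
    L.adjoint = L := by
  -- L is symmetric
  have hLsymm : L.IsFormalAdjoint L := by
    intro u v
    calc ⟪L u, (v : H)⟫_ℂ = ⟪L u, Linv (L v)⟫_ℂ := by rw [hLinv.2 v]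
    _ = ⟪Linv (L u), L v⟫_ℂ := (hsymm _ _).symm
    _ = ⟪(u : H), L v⟫_ℂ := by rw [hLinv.2 u]
  have hle : L ≤ L.adjoint := LinearPMap.IsFormalAdjoint.le_adjoint hLdense hLsymm
  have hfa : L.adjoint.IsFormalAdjoint L := LinearPMap.adjoint_isFormalAdjoint hLdense
  refine le_antisymm ?_ hle
  -- adjoint ≤ L
  refine ⟨?_, ?_⟩
  · intro y hy
    -- show y ∈ L.domain : we show y = Linv (L.adjoint ⟨y, hy⟩)
    set z : H := L.adjoint ⟨y, hy⟩ with hz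
    obtain ⟨hwmem, hw⟩ := hLinv.1 z
    have hyeq : y = Linv z := by
      apply ext_inner_left ℂ
      intro f
      obtain ⟨hfmem, hf⟩ := hLinv.1 f
      have h1 := hfa ⟨y, hy⟩ ⟨Linv f, hfmem⟩
      simp only [hf] at h1
      -- h1 : ⟪z, Linv f⟫ = ⟪y, f⟫
      calc ⟪f, y⟫_ℂ = (starRingEnd ℂ) ⟪y, f⟫_ℂ := (inner_conj_symm _ _).symm
      _ = (starRingEnd ℂ) ⟪z, Linv f⟫_ℂ := by rw [h1]
      _ = (starRingEnd ℂ) ⟪Linv z, f⟫_ℂ := by rw [hsymm]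
      _ = ⟪f, Linv z⟫_ℂ := inner_conj_symm _ _
    rw [hyeq]
    exact hwmem
  · intro x x' hxx'
    apply hLdense.eq_of_inner_left ℂ
    intro v' hv'
    obtain ⟨v, rfl⟩ : ∃ v : L.domain, (v : H) = v' := ⟨⟨v', hv'⟩, rfl⟩
    rw [hfa x v, hxx']
    calc ⟪(x' : H), L v⟫_ℂ = ⟪Linv (L x'), L v⟫_ℂ := by rw [hLinv.2 x']
    _ = ⟪L x', Linv (L v)⟫_ℂ := hsymm _ _
    _ = ⟪L x', (v : H)⟫_ℂ := by rw [hLinv.2 v]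

/-- Remark 4.5. Let `L_0` be a densely defined symmetric minimal operator
(so `L̂ = L_0*`), `L_N` a self-adjoint correct extension of `L_0`, and `L` a boundary correct
extension with `L⁻¹ = L_N⁻¹ + K`, `R(K) ⊆ Ker L̂`, `R(L_0) ⊆ Ker K`.
Then `L` is self-adjoint iff `K = K*`. -/
theorem selfadjoint_extension_iff_K_selfadjoint
    {H : Type} [NormedAddCommGroup H] [InnerProductSpace ℂ H] [CompleteSpace H]
    (L0 : H →ₗ.[ℂ] H)
    (hL0min : IsMinimalOp L0) (hL0dense : Dense (L0.domain : Set H))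
    (hL0symm : ∀ u v : L0.domain, ⟪L0 u, (v : H)⟫_ℂ = ⟪(u : H), L0 v⟫_ℂ)
    -- the self-adjoint correct extension `L_N`
    (LN : H →ₗ.[ℂ] H) (hLNext : L0 ≤ LN) (hLNsa : LN.adjoint = LN)
    (LNinv : H →L[ℂ] H) (hLNinv : IsBoundedInverse LN LNinv)
    -- the boundary correct extension `L`, with `L⁻¹ = L_N⁻¹ + K`
    (L : H →ₗ.[ℂ] H) (hLext : L0 ≤ L) (hLhat : L ≤ L0.adjoint) (hLclosed : L.IsClosed)
    (Linv : H →L[ℂ] H) (hLinv : IsBoundedInverse L Linv)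
    (K : H →L[ℂ] H) (hK : ∀ f : H, Linv f = LNinv f + K f)
    (hKranLhat : ∀ f : H, ∃ h : K f ∈ L0.adjoint.domain, L0.adjoint ⟨K f, h⟩ = 0)
    (hKkerL0 : ∀ u : L0.domain, K (L0 u) = 0) :
    L.adjoint = L ↔ ContinuousLinearMap.adjoint K = K := by
  have hLdense : Dense (L.domain : Set H) := hL0dense.mono hLext.1
  have hLNdense : Dense (LN.domain : Set H) := hL0dense.mono hLNext.1
  -- LN is symmetric
  have hLNsymm : ∀ u v : LN.domain, ⟪LN u, (v : H)⟫_ℂ = ⟪(u : H), LN v⟫_ℂ := by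
    have h := LinearPMap.adjoint_isFormalAdjoint hLNdense (T := LN)
    rw [hLNsa] at h
    exact h
  -- LNinv is symmetric
  have hLNinvsymm : ∀ f g : H, ⟪LNinv f, g⟫_ℂ = ⟪f, LNinv g⟫_ℂ := by
    intro f g
    obtain ⟨hf, hf2⟩ := hLNinv.1 f
    obtain ⟨hg, hg2⟩ := hLNinv.1 g
    have h := hLNsymm ⟨LNinv f, hf⟩ ⟨LNinv g, hg⟩
    rw [hf2, hg2] at h
    exact h.symm
  constructor
  · intro hLsa
    -- Linv is symmetric
    have hLsymm : ∀ u v : L.domain, ⟪L u, (v : H)⟫_ℂ = ⟪(u : H), L v⟫_ℂ := by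
      have h := LinearPMap.adjoint_isFormalAdjoint hLdense (T := L)
      rw [hLsa] at h
      exact h
    have hLinvsymm : ∀ f g : H, ⟪Linv f, g⟫_ℂ = ⟪f, Linv g⟫_ℂ := by
      intro f g
      obtain ⟨hf, hf2⟩ := hLinv.1 f
      obtain ⟨hg, hg2⟩ := hLinv.1 g
      have h := hLsymm ⟨Linv f, hf⟩ ⟨Linv g, hg⟩
      rw [hf2, hg2] at h
      exact h.symm
    -- K is symmetric
    have hKsymm : ∀ f g : H, ⟪K f, g⟫_ℂ = ⟪f, K g⟫_ℂ := by
      intro f g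
      have h1 := hLinvsymm f g
      rw [hK f, hK g] at h1
      rw [inner_add_left, inner_add_right, hLNinvsymm f g] at h1
      exact add_left_cancel h1
    ext f
    apply ext_inner_right ℂ
    intro g
    rw [ContinuousLinearMap.adjoint_inner_left]
    exact (hKsymm f g).symm
  · intro hKsa
    have hKsymm : ∀ f g : H, ⟪K f, g⟫_ℂ = ⟪f, K g⟫_ℂ := by
      intro f g
      conv_lhs => rw [← hKsa]
      exact ContinuousLinearMap.adjoint_inner_left K g f
    have hLinvsymm : ∀ f g : H, ⟪Linv f, g⟫_ℂ = ⟪f, Linv g⟫_ℂ := by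
      intro f g
      rw [hK f, hK g, inner_add_left, inner_add_right, hLNinvsymm f g, hKsymm f g]
    exact selfadjoint_of_inv_symm L hLdense Linv hLinv hLinvsymm
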